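/- arXiv:1810.05693 — 2 statements merged into one kernel-verified Lean document; each statement's English description precedes it below -/
import Mathlib

section
/- Let α < β with αβ ≠ 0 and let γ ∈ ℝ satisfy αγ > −1 and βγ > −1. Then for the function f̄(x) = |x|^γ on ℝ, the supremum over all bounded intervals I ⊂ ℝ of M_{I,β}(f̄)/M_{I,α}(f̄) equals the supremum over ε ∈ [0,1] of M_{(−ε,1),β}(f̄)/M_{(−ε,1),α}(f̄). -/
open MeasureTheory Set

/-- The `p`-mean of `f` over the interval `(a, b)`:
`M_{(a,b),p}(f) = ((1/(b-a)) ∫_a^b f(x)^p dx)^{1/p}`. -/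
noncomputable def intervalMean (p a b : ℝ) (f : ℝ → ℝ) : ℝ :=
  ((b - a)⁻¹ * ∫ x in a..b, f x ^ p) ^ (1 / p)

/-- The set of ratios `M_{I,β}(f)/M_{I,α}(f)` over bounded intervals `I ⊂ (0,∞)`;
its supremum is `P_{α,β}(f)`. -/
def ratioSetPos (α β : ℝ) (f : ℝ → ℝ) : Set ℝ :=
  {r | ∃ a b : ℝ, 0 ≤ a ∧ a < b ∧ r = intervalMean β a b f / intervalMean α a b f}

/-- The set of ratios `M_{I,β}(g)/M_{I,α}(g)` over bounded intervals `I ⊂ ℝ`;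
its supremum is `R_{α,β}(g)`. -/
def ratioSetAll (α β : ℝ) (g : ℝ → ℝ) : Set ℝ :=
  {r | ∃ a b : ℝ, a < b ∧ r = intervalMean β a b g / intervalMean α a b g}

/-! ### Auxiliary lemmas -/

-- concavity of `u ↦ log (1 - c^u)` on `(0,∞)` for `c ∈ (0,1)`
lemma concave_log_one_sub_rpow {c : ℝ} (hc0 : 0 < c) (hc1 : c < 1) :
    ConcaveOn ℝ (Ioi (0:ℝ)) (fun u => Real.log (1 - c ^ u)) := by
  have hl : Real.log c < 0 := Real.log_neg hc0 hc1
  have hrw : ∀ u : ℝ, c ^ u = Real.exp (Real.log c * u) := fun u =>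
    Real.rpow_def_of_pos hc0 u
  have hlt : ∀ u ∈ Ioi (0:ℝ), Real.exp (Real.log c * u) < 1 := by
    intro u hu
    rw [Real.exp_lt_one_iff]
    exact mul_neg_of_neg_of_pos hl hu
  have hderiv : ∀ u ∈ Ioi (0:ℝ), HasDerivAt (fun u => Real.log (1 - c ^ u))
      (-(Real.exp (Real.log c * u) * Real.log c) / (1 - Real.exp (Real.log c * u))) u := by
    intro u hu
    have h1 : HasDerivAt (fun u : ℝ => Real.log c * u) (Real.log c) u := by
      simpa using (hasDerivAt_id u).const_mul (Real.log c)
    have h2 := h1.exp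
    have h3 := h2.const_sub 1
    have hne : 1 - Real.exp (Real.log c * u) ≠ 0 := by
      have := hlt u hu; linarith
    have h4 := h3.log hne
    simpa [hrw] using h4
  have hint : interior (Ioi (0:ℝ)) = Ioi 0 := interior_Ioi
  apply AntitoneOn.concaveOn_of_deriv (convex_Ioi 0)
  · -- continuity
    apply ContinuousOn.log
    · exact continuousOn_const.sub ((Real.continuous_exp.comp
        (continuous_const.mul continuous_id)).comp_continuousOn' continuousOn_id |>.congr
        (fun u _ => (hrw u)))
    · intro u hu
      simp only [hrw]
      have := hlt u hu; intro h; linarith [h]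
  · rw [hint]
    intro u hu
    exact (hderiv u hu).differentiableAt.differentiableWithinAt
  · rw [hint]
    intro x hx y hy hxy
    rw [(hderiv x hx).deriv, (hderiv y hy).deriv]
    have hA : Real.exp (Real.log c * y) ≤ Real.exp (Real.log c * x) :=
      Real.exp_le_exp.2 (by nlinarith)
    have hx1 := hlt x hx
    have hy1 := hlt y hy
    have hxp := Real.exp_pos (Real.log c * x)
    have hyp := Real.exp_pos (Real.log c * y)
    rw [div_le_div_iff₀ (by linarith) (by linarith)]
    nlinarith

lemma slope_log_ineq {c α β γ : ℝ} (hc0 : 0 < c) (hc1 : c < 1)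
    (hα : α ≠ 0) (hβ : β ≠ 0) (hαβ : α < β)
    (hu : 0 < α * γ + 1) (hv : 0 < β * γ + 1) :
    Real.log ((1 - c ^ (β * γ + 1)) / (1 - c)) / β ≤
      Real.log ((1 - c ^ (α * γ + 1)) / (1 - c)) / α := by
  have hc1' : (0:ℝ) < 1 - c := by linarith
  rcases eq_or_ne γ 0 with rfl | hγ
  · simp [div_self hc1'.ne']
  set K : ℝ → ℝ := fun u => Real.log (1 - c ^ u) with hK
  have hKconv : ConvexOn ℝ (Ioi (0:ℝ)) (-K) := (concave_log_one_sub_rpow hc0 hc1).neg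
  have h1mem : (1:ℝ) ∈ Ioi (0:ℝ) := by norm_num
  have hlog : ∀ p : ℝ, 0 < p * γ + 1 →
      Real.log ((1 - c ^ (p * γ + 1)) / (1 - c)) = K (p * γ + 1) - K 1 := by
    intro p hp
    rw [hK]
    simp only
    rw [Real.log_div (by have := Real.rpow_lt_one hc0.le hc1 hp; linarith) (by linarith),
      Real.rpow_one]
  rw [hlog α hu, hlog β hv]
  set A := K (α * γ + 1) - K 1 with hA
  set B := K (β * γ + 1) - K 1 with hB
  have hne1 : β * γ + 1 ≠ 1 := by
    intro h
    have : β * γ = 0 := by linarith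
    rcases mul_eq_zero.1 this with h' | h' <;> [exact hβ h'; exact hγ h']
  have hne2 : α * γ + 1 ≠ 1 := by
    intro h
    have : α * γ = 0 := by linarith
    rcases mul_eq_zero.1 this with h' | h' <;> [exact hα h'; exact hγ h']
  rcases lt_or_gt_of_ne hγ with hγneg | hγpos
  · -- γ < 0 : β*γ+1 ≤ α*γ+1
    have hle : β * γ + 1 ≤ α * γ + 1 := by nlinarith
    have hsec := hKconv.secant_mono h1mem (mem_Ioi.2 hv) (mem_Ioi.2 hu) hne1 hne2 hle
    simp only [Pi.neg_apply] at hsec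
    have e1 : (-K (β*γ+1) - -K 1) / (β*γ+1-1) = -B / (β*γ) := by rw [hB]; ring_nf
    have e2 : (-K (α*γ+1) - -K 1) / (α*γ+1-1) = -A / (α*γ) := by rw [hA]; ring_nf
    rw [e1, e2] at hsec
    have hmul : (-A / (α*γ)) * γ ≤ (-B / (β*γ)) * γ :=
      mul_le_mul_of_nonpos_right hsec hγneg.le
    have f1 : (-A / (α*γ)) * γ = -(A/α) := by field_simp
    have f2 : (-B / (β*γ)) * γ = -(B/β) := by field_simp
    rw [f1, f2] at hmul
    linarith
  · have hle : α * γ + 1 ≤ β * γ + 1 := by nlinarith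
    have hsec := hKconv.secant_mono h1mem (mem_Ioi.2 hu) (mem_Ioi.2 hv) hne2 hne1 hle
    simp only [Pi.neg_apply] at hsec
    have e1 : (-K (β*γ+1) - -K 1) / (β*γ+1-1) = -B / (β*γ) := by rw [hB]; ring_nf
    have e2 : (-K (α*γ+1) - -K 1) / (α*γ+1-1) = -A / (α*γ) := by rw [hA]; ring_nf
    rw [e1, e2] at hsec
    have hmul : (-A / (α*γ)) * γ ≤ (-B / (β*γ)) * γ :=
      mul_le_mul_of_nonneg_right hsec hγpos.le
    have f1 : (-A / (α*γ)) * γ = -(A/α) := by field_simp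
    have f2 : (-B / (β*γ)) * γ = -(B/β) := by field_simp
    rw [f1, f2] at hmul
    linarith

lemma intervalIntegrable_abs_rpow {r : ℝ} (hr : -1 < r) (a b : ℝ) :
    IntervalIntegrable (fun x => |x| ^ r) volume a b := by
  suffices h : ∀ c : ℝ, IntervalIntegrable (fun x => |x| ^ r) volume 0 c by
    exact (h a).symm.trans (h b)
  have hpos : ∀ c : ℝ, 0 ≤ c → IntervalIntegrable (fun x => |x| ^ r) volume 0 c := by
    intro c hc
    apply (intervalIntegral.intervalIntegrable_rpow' hr (a := 0) (b := c)).congr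
    intro x hx
    rw [uIoc_of_le hc] at hx
    simp [abs_of_pos hx.1]
  intro c
  rcases le_or_gt 0 c with hc | hc
  · exact hpos c hc
  · rw [IntervalIntegrable.iff_comp_neg]
    simp only [abs_neg, neg_zero]
    exact hpos (-c) (by linarith)

lemma integral_abs_rpow_of_nonneg {r : ℝ} (hr : -1 < r) {a b : ℝ} (ha : 0 ≤ a) (hab : a ≤ b) :
    ∫ x in a..b, |x| ^ r = (b ^ (r + 1) - a ^ (r + 1)) / (r + 1) := by
  rw [intervalIntegral.integral_congr (g := fun x => x ^ r)
    (fun x hx => by rw [uIcc_of_le hab] at hx; rw [abs_of_nonneg (le_trans ha hx.1)])]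
  exact integral_rpow (Or.inl hr)

lemma integral_abs_rpow_neg {r : ℝ} (hr : -1 < r) {ε : ℝ} (hε : 0 ≤ ε) :
    ∫ x in (-ε)..0, |x| ^ r = ε ^ (r + 1) / (r + 1) := by
  have h := intervalIntegral.integral_comp_neg (a := 0) (b := ε) (fun x => |x| ^ r)
  simp only [abs_neg, neg_zero] at h
  rw [← h, integral_abs_rpow_of_nonneg hr le_rfl hε]
  rw [Real.zero_rpow (by linarith)]
  ring

lemma integral_abs_rpow_span {r : ℝ} (hr : -1 < r) {ε : ℝ} (hε : 0 ≤ ε) :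
    ∫ x in (-ε)..1, |x| ^ r = (ε ^ (r + 1) + 1) / (r + 1) := by
  rw [← intervalIntegral.integral_add_adjacent_intervals
      (intervalIntegrable_abs_rpow hr (-ε) 0) (intervalIntegrable_abs_rpow hr 0 1)]
  rw [integral_abs_rpow_neg hr hε, integral_abs_rpow_of_nonneg hr le_rfl zero_le_one]
  rw [Real.one_rpow, Real.zero_rpow (by linarith)]
  ring

lemma integrand_eq (γ p : ℝ) : ∀ x : ℝ, (|x| ^ γ) ^ p = |x| ^ (p * γ) := fun x => by
  rw [← Real.rpow_mul (abs_nonneg x), mul_comm]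

lemma meanFormula1 {p γ : ℝ} (hp : p ≠ 0) (hw : 0 < p * γ + 1) {c : ℝ} (hc : 0 ≤ c)
    (hc1 : c < 1) :
    intervalMean p c 1 (fun x => |x| ^ γ) =
      ((1 - c ^ (p * γ + 1)) / ((p * γ + 1) * (1 - c))) ^ (1 / p) := by
  unfold intervalMean
  simp only [integrand_eq γ p]
  rw [integral_abs_rpow_of_nonneg (by linarith) hc hc1.le, Real.one_rpow]
  congr 1
  field_simp

lemma meanFormula2 {p γ : ℝ} (hp : p ≠ 0) (hw : 0 < p * γ + 1) {ε : ℝ} (hε : 0 ≤ ε) :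
    intervalMean p (-ε) 1 (fun x => |x| ^ γ) =
      ((ε ^ (p * γ + 1) + 1) / ((p * γ + 1) * (1 + ε))) ^ (1 / p) := by
  unfold intervalMean
  simp only [integrand_eq γ p]
  rw [integral_abs_rpow_span (by linarith) hε]
  congr 1
  have : 1 - -ε = 1 + ε := by ring
  rw [this, inv_mul_eq_div, div_div]

lemma mean_reflect (p γ a b : ℝ) :
    intervalMean p a b (fun x => |x| ^ γ) = intervalMean p (-b) (-a) (fun x => |x| ^ γ) := by
  unfold intervalMean
  have h := intervalIntegral.integral_comp_neg (a := a) (b := b) (fun x => (|x| ^ γ) ^ p)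
  simp only [abs_neg] at h
  rw [← h]
  ring_nf

lemma mean_scale {p γ a b : ℝ} (hp : p ≠ 0) (hb : 0 < b) (hab : a < b) :
    intervalMean p a b (fun x => |x| ^ γ) =
      b ^ γ * intervalMean p (a / b) 1 (fun x => |x| ^ γ) := by
  unfold intervalMean
  simp only [integrand_eq γ p]
  have h := intervalIntegral.integral_comp_mul_left (a := a / b) (b := 1)
    (fun x => |x| ^ (p * γ)) hb.ne'
  rw [mul_div_cancel₀ _ hb.ne', mul_one] at h
  have h2 : (fun x : ℝ => |b * x| ^ (p * γ)) = fun x => b ^ (p * γ) * |x| ^ (p * γ) := by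
    funext x
    rw [abs_mul, abs_of_pos hb, Real.mul_rpow hb.le (abs_nonneg x)]
  simp only [h2] at h
  rw [intervalIntegral.integral_const_mul] at h
  have hI : ∫ x in a..b, |x| ^ (p * γ) =
      b * (b ^ (p * γ) * ∫ x in a / b..1, |x| ^ (p * γ)) := by
    rw [h, smul_eq_mul]
    field_simp
  rw [hI]
  have hba : (b - a)⁻¹ * (b * (b ^ (p*γ) * ∫ x in a/b..1, |x| ^ (p*γ)))
      = b ^ (p*γ) * ((1 - a/b)⁻¹ * ∫ x in a/b..1, |x| ^ (p*γ)) := by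
    rw [show (1 : ℝ) - a/b = (b - a)/b by field_simp]
    field_simp
  rw [hba]
  have hInonneg : 0 ≤ ∫ x in a/b..1, |x| ^ (p*γ) := by
    apply intervalIntegral.integral_nonneg
    · rw [div_le_one hb]; exact hab.le
    · intro x _; positivity
  have hab1 : (0:ℝ) ≤ (1 - a/b)⁻¹ := by
    have : a / b < 1 := (div_lt_one hb).2 hab
    exact inv_nonneg.mpr (by linarith)
  rw [Real.mul_rpow (by positivity) (mul_nonneg hab1 hInonneg),
    ← Real.rpow_mul hb.le]
  congr 2
  field_simp

lemma mean1_pos {p γ : ℝ} (hp : p ≠ 0) (hw : 0 < p * γ + 1) {c : ℝ} (hc : 0 ≤ c)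
    (hc1 : c < 1) : 0 < intervalMean p c 1 (fun x => |x| ^ γ) := by
  rw [meanFormula1 hp hw hc hc1]
  have h1 : c ^ (p * γ + 1) < 1 := Real.rpow_lt_one hc hc1 hw
  apply Real.rpow_pos_of_pos
  have h2 : (0:ℝ) < 1 - c := by linarith
  exact div_pos (by linarith) (mul_pos hw h2)

lemma mean2_pos {p γ : ℝ} (hp : p ≠ 0) (hw : 0 < p * γ + 1) {ε : ℝ} (hε : 0 ≤ ε) :
    0 < intervalMean p (-ε) 1 (fun x => |x| ^ γ) := by
  rw [meanFormula2 hp hw hε]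
  apply Real.rpow_pos_of_pos
  have h1 : (0:ℝ) < ε ^ (p * γ + 1) + 1 := by positivity
  exact div_pos h1 (mul_pos hw (by linarith))

lemma hard_ineq {α β γ : ℝ} (hα : α ≠ 0) (hβ : β ≠ 0) (hαβ : α < β)
    (hu : 0 < α * γ + 1) (hv : 0 < β * γ + 1) {c : ℝ} (hc0 : 0 < c) (hc1 : c < 1) :
    intervalMean β c 1 (fun x => |x| ^ γ) / intervalMean α c 1 (fun x => |x| ^ γ) ≤
      intervalMean β 0 1 (fun x => |x| ^ γ) / intervalMean α 0 1 (fun x => |x| ^ γ) := by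
  have Mβc := mean1_pos hβ hv hc0.le hc1
  have Mαc := mean1_pos hα hu hc0.le hc1
  have Mβ0 := mean1_pos hβ hv (le_refl 0) one_pos
  have Mα0 := mean1_pos hα hu (le_refl 0) one_pos
  rw [← Real.log_le_log_iff (by positivity) (by positivity)]
  have hc1' : (0:ℝ) < 1 - c := by linarith
  have hv1 : c ^ (β * γ + 1) < 1 := Real.rpow_lt_one hc0.le hc1 hv
  have hu1 : c ^ (α * γ + 1) < 1 := Real.rpow_lt_one hc0.le hc1 hu
  have hBβ : (0:ℝ) < (1 - c ^ (β * γ + 1)) / ((β * γ + 1) * (1 - c)) := by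
    exact div_pos (by linarith) (mul_pos hv hc1')
  have hBα : (0:ℝ) < (1 - c ^ (α * γ + 1)) / ((α * γ + 1) * (1 - c)) := by
    exact div_pos (by linarith) (mul_pos hu hc1')
  rw [Real.log_div Mβc.ne' Mαc.ne', Real.log_div Mβ0.ne' Mα0.ne',
    meanFormula1 hβ hv hc0.le hc1, meanFormula1 hα hu hc0.le hc1,
    meanFormula1 hβ hv (le_refl 0) one_pos, meanFormula1 hα hu (le_refl 0) one_pos,
    Real.log_rpow hBβ, Real.log_rpow hBα]
  rw [Real.zero_rpow (by linarith : β * γ + 1 ≠ 0), Real.zero_rpow (by linarith : α * γ + 1 ≠ 0)]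
  have e0 : ∀ w : ℝ, 0 < w → ((1:ℝ) - 0) / (w * (1 - 0)) = w⁻¹ := by
    intro w hw; field_simp
  rw [e0 _ hv, e0 _ hu, Real.log_rpow (by positivity), Real.log_rpow (by positivity),
    Real.log_inv, Real.log_inv]
  have expβ : Real.log ((1 - c ^ (β * γ + 1)) / ((β * γ + 1) * (1 - c)))
      = Real.log ((1 - c ^ (β * γ + 1)) / (1 - c)) - Real.log (β * γ + 1) := by
    rw [div_mul_eq_div_div_swap, Real.log_div (div_pos (by linarith) hc1').ne' (by positivity)]
  have expα : Real.log ((1 - c ^ (α * γ + 1)) / ((α * γ + 1) * (1 - c)))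
      = Real.log ((1 - c ^ (α * γ + 1)) / (1 - c)) - Real.log (α * γ + 1) := by
    rw [div_mul_eq_div_div_swap, Real.log_div (div_pos (by linarith) hc1').ne' (by positivity)]
  rw [expβ, expα]
  have key := slope_log_ineq hc0 hc1 hα hβ hαβ hu hv
  have eβ : (1 / β) * (Real.log ((1 - c ^ (β * γ + 1)) / (1 - c)) - Real.log (β * γ + 1))
      = Real.log ((1 - c ^ (β * γ + 1)) / (1 - c)) / β - Real.log (β * γ + 1) / β := by
    ring
  have eα : (1 / α) * (Real.log ((1 - c ^ (α * γ + 1)) / (1 - c)) - Real.log (α * γ + 1))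
      = Real.log ((1 - c ^ (α * γ + 1)) / (1 - c)) / α - Real.log (α * γ + 1) / α := by
    ring
  rw [eβ, eα]
  have : (1 / β) * -Real.log (β * γ + 1) - (1 / α) * -Real.log (α * γ + 1)
      = -(Real.log (β * γ + 1) / β) + Real.log (α * γ + 1) / α := by ring
  rw [this]
  linarith

lemma contOn_mean2 {p γ : ℝ} (hp : p ≠ 0) (hw : 0 < p * γ + 1) :
    ContinuousOn (fun ε => intervalMean p (-ε) 1 (fun x => |x| ^ γ)) (Icc (0:ℝ) 1) := by
  have heq : ∀ ε ∈ Icc (0:ℝ) 1, intervalMean p (-ε) 1 (fun x => |x| ^ γ)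
      = ((ε ^ (p * γ + 1) + 1) / ((p * γ + 1) * (1 + ε))) ^ (1 / p) := by
    intro ε hε
    exact meanFormula2 hp hw hε.1
  apply ContinuousOn.congr _ heq
  apply ContinuousOn.rpow_const
  · apply ContinuousOn.div
    · exact (continuousOn_id.rpow_const (fun x _ => Or.inr hw.le)).add continuousOn_const
    · exact continuousOn_const.mul (continuousOn_const.add continuousOn_id)
    · intro ε hε
      have : (0:ℝ) < 1 + ε := by linarith [hε.1]
      positivity
  · intro ε hε
    left
    have h1 : (0:ℝ) ≤ ε ^ (p * γ + 1) := Real.rpow_nonneg hε.1 _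
    have h2 : (0:ℝ) < 1 + ε := by linarith [hε.1]
    exact (div_pos (by linarith) (mul_pos hw h2)).ne'

lemma ratio_bound {α β γ : ℝ} (hα : α ≠ 0) (hβ : β ≠ 0)
    (hu : 0 < α * γ + 1) (hv : 0 < β * γ + 1) :
    ∃ B : ℝ, ∀ ε ∈ Icc (0:ℝ) 1,
      intervalMean β (-ε) 1 (fun x => |x| ^ γ) / intervalMean α (-ε) 1 (fun x => |x| ^ γ) ≤ B := by
  set g : ℝ → ℝ := fun ε =>
    intervalMean β (-ε) 1 (fun x => |x| ^ γ) / intervalMean α (-ε) 1 (fun x => |x| ^ γ) with hg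
  have hcont : ContinuousOn g (Icc 0 1) := by
    apply (contOn_mean2 hβ hv).div (contOn_mean2 hα hu)
    intro ε hε
    exact (mean2_pos hα hu hε.1).ne'
  obtain ⟨B, hB⟩ := (isCompact_Icc.image_of_continuousOn hcont).bddAbove
  exact ⟨B, fun ε hε => hB (mem_image_of_mem g hε)⟩

/-- For `α < β` with `αβ ≠ 0` and `γ` with `αγ > -1`, `βγ > -1`, the supremum over all
bounded intervals `I ⊂ ℝ` of `M_{I,β}(|x|^γ)/M_{I,α}(|x|^γ)` equals the supremum over
`ε ∈ [0,1]` of the same ratio for the intervals `(-ε, 1)`. -/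
theorem sup_ratio_power_over_special_intervals
    (α β γ : ℝ) (hαβ : α < β) (h0 : α * β ≠ 0)
    (hγα : α * γ > -1) (hγβ : β * γ > -1) :
    sSup (ratioSetAll α β (fun x => |x| ^ γ)) =
      sSup {r | ∃ ε ∈ Icc (0 : ℝ) 1,
        r = intervalMean β (-ε) 1 (fun x => |x| ^ γ) /
            intervalMean α (-ε) 1 (fun x => |x| ^ γ)} := by
  have hα : α ≠ 0 := fun h => h0 (by rw [h, zero_mul])
  have hβ : β ≠ 0 := fun h => h0 (by rw [h, mul_zero])
  have hu : 0 < α * γ + 1 := by linarith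
  have hv : 0 < β * γ + 1 := by linarith
  set f : ℝ → ℝ := fun x => |x| ^ γ with hf
  set T : Set ℝ := {r | ∃ ε ∈ Icc (0 : ℝ) 1,
    r = intervalMean β (-ε) 1 f / intervalMean α (-ε) 1 f} with hT
  -- core reduction for intervals with 0 ≤ a + b
  have core : ∀ a b : ℝ, a < b → 0 ≤ a + b → ∃ ε ∈ Icc (0:ℝ) 1,
      intervalMean β a b f / intervalMean α a b f ≤
        intervalMean β (-ε) 1 f / intervalMean α (-ε) 1 f := by
    intro a b hab hsum
    have hb : 0 < b := by linarith
    have hsc : intervalMean β a b f / intervalMean α a b f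
        = intervalMean β (a/b) 1 f / intervalMean α (a/b) 1 f := by
      rw [mean_scale hβ hb hab, mean_scale hα hb hab,
        mul_div_mul_left _ _ (Real.rpow_pos_of_pos hb γ).ne']
    have hc1 : a / b < 1 := (div_lt_one hb).2 hab
    have hcm1 : -1 ≤ a / b := (le_div_iff₀ hb).2 (by linarith)
    rcases le_or_gt (a / b) 0 with hc0 | hc0
    · refine ⟨-(a/b), ⟨by linarith, by linarith⟩, ?_⟩
      rw [hsc, neg_neg]
    · refine ⟨0, ⟨le_rfl, zero_le_one⟩, ?_⟩
      rw [hsc, neg_zero]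
      exact hard_ineq hα hβ hαβ hu hv hc0 hc1
  have step2 : ∀ a b : ℝ, a < b → ∃ ε ∈ Icc (0:ℝ) 1,
      intervalMean β a b f / intervalMean α a b f ≤
        intervalMean β (-ε) 1 f / intervalMean α (-ε) 1 f := by
    intro a b hab
    rcases le_total 0 (a + b) with h | h
    · exact core a b hab h
    · obtain ⟨ε, hε, hle⟩ := core (-b) (-a) (by linarith) (by linarith)
      refine ⟨ε, hε, ?_⟩
      rw [mean_reflect β γ a b, mean_reflect α γ a b]
      exact hle
  obtain ⟨B, hB⟩ := ratio_bound hα hβ hu hv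
  have hTsub : T ⊆ ratioSetAll α β f := by
    rintro r ⟨ε, hε, rfl⟩
    exact ⟨-ε, 1, by linarith [hε.1], rfl⟩
  have hTne : T.Nonempty :=
    ⟨intervalMean β (-(0:ℝ)) 1 f / intervalMean α (-(0:ℝ)) 1 f,
      0, ⟨le_rfl, zero_le_one⟩, rfl⟩
  have hSbdd : BddAbove (ratioSetAll α β f) := by
    refine ⟨B, ?_⟩
    rintro r ⟨a, b, hab, rfl⟩
    obtain ⟨ε, hε, hle⟩ := step2 a b hab
    exact hle.trans (hB ε hε)
  have hTbdd : BddAbove T := by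
    refine ⟨B, ?_⟩
    rintro r ⟨ε, hε, rfl⟩
    exact hB ε hε
  have hSne : (ratioSetAll α β f).Nonempty := hTne.mono hTsub |>.mono (subset_refl _)
  apply le_antisymm
  · apply csSup_le hSne
    rintro r ⟨a, b, hab, rfl⟩
    obtain ⟨ε, hε, hle⟩ := step2 a b hab
    exact hle.trans (le_csSup hTbdd ⟨ε, hε, rfl⟩)
  · exact csSup_le_csSup hSbdd hTne hTsub
end

section
/- Let 0 < α < β. Then the supremum over γ ∈ (−1/β, 0) of C_{α,β,γ} equals 2^{1/β}, where C_{α,β,γ} = max over ε ∈ [0,1] of C_{α,β,γ}(ε). -/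
open Set Filter Real

/-- The function `C_{α,β,γ}(ε)` from the paper:
`C_{α,β,γ}(ε) = (ε^{γβ+1}+1)^{1/β} (1+ε)^{1/α} / ((ε^{γα+1}+1)^{1/α} (1+ε)^{1/β})`. -/
noncomputable def Cfun (α β γ ε : ℝ) : ℝ :=
  ((ε ^ (γ * β + 1) + 1) ^ (1 / β) * (1 + ε) ^ (1 / α)) /
    ((ε ^ (γ * α + 1) + 1) ^ (1 / α) * (1 + ε) ^ (1 / β))

/-- `C_{α,β,γ}`: the maximum of `C_{α,β,γ}(ε)` over `ε ∈ [0,1]`. -/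
noncomputable def Cmax (α β γ : ℝ) : ℝ :=
  sSup (Cfun α β γ '' Icc (0 : ℝ) 1)

/-- Uniform bound: `Cfun α β γ ε ≤ 2^{1/β}` for `γ ∈ (-1/β, 0)`, `ε ∈ [0,1]`. -/
lemma Cfun_le (α β : ℝ) (hα : 0 < α) (hαβ : α < β) (γ : ℝ)
    (hγ1 : -(1 / β) < γ) (hγ2 : γ < 0) {ε : ℝ} (hε : ε ∈ Icc (0:ℝ) 1) :
    Cfun α β γ ε ≤ (2 : ℝ) ^ (1 / β) := by
  have hβ : 0 < β := hα.trans hαβ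
  obtain ⟨hε0, hε1⟩ := hε
  have hb1 : (-(1 / β)) * β = -1 := by field_simp
  have hpβ : 0 < γ * β + 1 := by nlinarith [mul_lt_mul_of_pos_right hγ1 hβ]
  have hab : α / β < 1 := (div_lt_one hβ).2 hαβ
  have hpα : 0 < γ * α + 1 := by
    have := mul_lt_mul_of_pos_right hγ1 hα
    have h2 : (-(1 / β)) * α = -(α / β) := by field_simp
    nlinarith
  have hpα1 : γ * α + 1 ≤ 1 := by nlinarith
  -- main pieces
  have hX0 : (0:ℝ) ≤ ε ^ (γ * β + 1) := Real.rpow_nonneg hε0 _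
  have hX1 : ε ^ (γ * β + 1) ≤ 1 := Real.rpow_le_one hε0 hε1 hpβ.le
  have hZY : ε ≤ ε ^ (γ * α + 1) := by
    rcases eq_or_lt_of_le hε0 with h | h
    · rw [← h]; exact Real.rpow_nonneg le_rfl _
    · calc ε = ε ^ (1:ℝ) := (Real.rpow_one ε).symm
        _ ≤ ε ^ (γ * α + 1) := Real.rpow_le_rpow_of_exponent_ge h hε1 hpα1
  set a := (ε ^ (γ * β + 1) + 1) ^ (1 / β) with ha
  set b := (1 + ε) ^ (1 / α) with hb
  set z := (ε ^ (γ * α + 1) + 1) ^ (1 / α) with hz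
  set w := (1 + ε) ^ (1 / β) with hw
  have ha2 : a ≤ (2:ℝ) ^ (1 / β) :=
    Real.rpow_le_rpow (by linarith) (by linarith) (by positivity)
  have hbz : b ≤ z :=
    Real.rpow_le_rpow (by linarith) (by linarith) (by positivity)
  have hw1 : (1:ℝ) ≤ w := Real.one_le_rpow (by linarith) (by positivity)
  have hb0 : 0 ≤ b := Real.rpow_nonneg (by linarith) _
  have hz0 : 0 < z := Real.rpow_pos_of_pos (by nlinarith) _
  have hw0 : 0 < w := by linarith
  have hc0 : (0:ℝ) ≤ (2:ℝ) ^ (1 / β) := Real.rpow_nonneg (by norm_num) _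
  have hD : 0 < z * w := mul_pos hz0 hw0
  rw [Cfun, ← ha, ← hb, ← hz, ← hw, div_le_iff₀ hD]
  calc a * b ≤ (2:ℝ) ^ (1 / β) * z := mul_le_mul ha2 hbz hb0 hc0
    _ ≤ (2:ℝ) ^ (1 / β) * (z * w) := by nlinarith [mul_nonneg (mul_nonneg hc0 hz0.le) (sub_nonneg.2 hw1)]
/-- The limit along the curve `γ = -(1/β) + t`, `ε = t`. -/
lemma Cfun_tendsto (α β : ℝ) (hα : 0 < α) (hαβ : α < β) :
    Tendsto (fun t : ℝ => Cfun α β (-(1 / β) + t) t) (nhdsWithin 0 (Ioi 0))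
      (nhds ((2 : ℝ) ^ (1 / β))) := by
  have hβ : 0 < β := hα.trans hαβ
  have hab : α / β < 1 := (div_lt_one hβ).2 hαβ
  -- log t * t → 0
  have hlt : Tendsto (fun t : ℝ => Real.log t * t) (nhdsWithin 0 (Ioi 0)) (nhds 0) := by
    have := tendsto_log_mul_rpow_nhdsGT_zero (one_pos)
    simpa [Real.rpow_one] using this
  -- A : t ^ ((-(1/β)+t)*β + 1) → 1
  have hA : Tendsto (fun t : ℝ => t ^ ((-(1 / β) + t) * β + 1)) (nhdsWithin 0 (Ioi 0))
      (nhds 1) := by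
    have h1 : Tendsto (fun t : ℝ => Real.exp (Real.log t * t * β)) (nhdsWithin 0 (Ioi 0))
        (nhds 1) := by
      have h2 : Tendsto (fun t : ℝ => Real.log t * t * β) (nhdsWithin 0 (Ioi 0)) (nhds 0) := by
        simpa using hlt.mul_const β
      simpa [Function.comp_def] using (Real.continuous_exp.continuousAt (x := 0)).tendsto.comp h2
    refine h1.congr' ?_
    filter_upwards [self_mem_nhdsWithin] with t (ht : 0 < t)
    rw [Real.rpow_def_of_pos ht]
    congr 1
    field_simp
    ring
  -- B : t ^ ((-(1/β)+t)*α + 1) → 0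
  have hB : Tendsto (fun t : ℝ => t ^ ((-(1 / β) + t) * α + 1)) (nhdsWithin 0 (Ioi 0))
      (nhds 0) := by
    have hE : Tendsto (fun t : ℝ => (-(1 / β) + t) * α + 1) (nhdsWithin 0 (Ioi 0))
        (nhds ((-(1 / β) + 0) * α + 1)) := by
      exact (((continuous_const.add continuous_id).mul continuous_const).add
        continuous_const).continuousAt.tendsto.mono_left nhdsWithin_le_nhds
    have hEpos : 0 < (-(1 / β) + 0) * α + 1 := by
      have : (-(1 / β) + 0) * α = -(α / β) := by ring
      rw [this]; linarith
    have hbot : Tendsto (fun t : ℝ => Real.log t * ((-(1 / β) + t) * α + 1))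
        (nhdsWithin 0 (Ioi 0)) atBot :=
      Filter.Tendsto.atBot_mul_pos hEpos tendsto_log_nhdsGT_zero hE
    have h1 : Tendsto (fun t : ℝ => Real.exp (Real.log t * ((-(1 / β) + t) * α + 1)))
        (nhdsWithin 0 (Ioi 0)) (nhds 0) := Real.tendsto_exp_atBot.comp hbot
    refine h1.congr' ?_
    filter_upwards [self_mem_nhdsWithin] with t (ht : 0 < t)
    rw [Real.rpow_def_of_pos ht]
  -- (1 + t) → 1
  have hone : Tendsto (fun t : ℝ => 1 + t) (nhdsWithin 0 (Ioi 0)) (nhds 1) := by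
    have : Tendsto (fun t : ℝ => 1 + t) (nhds 0) (nhds (1 + 0)) :=
      (continuous_const.add continuous_id).continuousAt.tendsto
    simpa using this.mono_left nhdsWithin_le_nhds
  -- numerator
  have hnum : Tendsto (fun t : ℝ => (t ^ ((-(1 / β) + t) * β + 1) + 1) ^ (1 / β) *
      (1 + t) ^ (1 / α)) (nhdsWithin 0 (Ioi 0)) (nhds ((2:ℝ) ^ (1 / β))) := by
    have h1 : Tendsto (fun t : ℝ => t ^ ((-(1 / β) + t) * β + 1) + 1) (nhdsWithin 0 (Ioi 0))
        (nhds 2) := by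
      have h := hA.add (tendsto_const_nhds (x := (1:ℝ)))
      rw [show (1:ℝ) + 1 = 2 by norm_num] at h; exact h
    have h2 := h1.rpow_const (p := 1 / β) (Or.inl (by norm_num))
    have h3 := hone.rpow_const (p := 1 / α) (Or.inl (by norm_num))
    have := h2.mul h3
    simpa using this
  -- denominator
  have hden : Tendsto (fun t : ℝ => (t ^ ((-(1 / β) + t) * α + 1) + 1) ^ (1 / α) *
      (1 + t) ^ (1 / β)) (nhdsWithin 0 (Ioi 0)) (nhds 1) := by
    have h1 : Tendsto (fun t : ℝ => t ^ ((-(1 / β) + t) * α + 1) + 1) (nhdsWithin 0 (Ioi 0))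
        (nhds 1) := by
      have h := hB.add (tendsto_const_nhds (x := (1:ℝ)))
      rw [show (0:ℝ) + 1 = 1 by norm_num] at h; exact h
    have h2 := h1.rpow_const (p := 1 / α) (Or.inl (by norm_num))
    have h3 := hone.rpow_const (p := 1 / β) (Or.inl (by norm_num))
    have := h2.mul h3
    simpa using this
  have := hnum.div hden (by norm_num)
  simpa [Cfun, Pi.div_def] using this

/-- For `0 < α < β`, the supremum over `γ ∈ (-1/β, 0)` of `C_{α,β,γ}` equals `2^{1/β}`. -/
theorem sup_Cmax_gamma_neg
    (α β : ℝ) (hα : 0 < α) (hαβ : α < β) :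
    sSup {c | ∃ γ : ℝ, -(1 / β) < γ ∧ γ < 0 ∧ c = Cmax α β γ} = (2 : ℝ) ^ (1 / β) := by
  have hβ : 0 < β := hα.trans hαβ
  have hc0 : (0:ℝ) ≤ (2:ℝ) ^ (1 / β) := Real.rpow_nonneg (by norm_num) _
  -- each Cmax is at most 2^(1/β)
  have hCmax_le : ∀ γ : ℝ, -(1 / β) < γ → γ < 0 → Cmax α β γ ≤ (2:ℝ) ^ (1 / β) := by
    intro γ h1 h2
    refine Real.sSup_le ?_ hc0
    rintro x ⟨ε, hε, rfl⟩
    exact Cfun_le α β hα hαβ γ h1 h2 hε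
  have hbddim : ∀ γ : ℝ, -(1 / β) < γ → γ < 0 → BddAbove (Cfun α β γ '' Icc (0:ℝ) 1) := by
    intro γ h1 h2
    exact ⟨(2:ℝ) ^ (1 / β), by rintro x ⟨ε, hε, rfl⟩; exact Cfun_le α β hα hαβ γ h1 h2 hε⟩
  set S := {c | ∃ γ : ℝ, -(1 / β) < γ ∧ γ < 0 ∧ c = Cmax α β γ} with hS
  have hSne : S.Nonempty := by
    refine ⟨Cmax α β (-(1 / (2 * β))), -(1 / (2 * β)), ?_, ?_, rfl⟩
    · have : (1:ℝ) / (2 * β) < 1 / β := by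
        rw [div_lt_div_iff₀ (by linarith) hβ]; nlinarith
      linarith
    · have : (0:ℝ) < 1 / (2 * β) := by positivity
      linarith
  have hSbdd : BddAbove S := by
    refine ⟨(2:ℝ) ^ (1 / β), ?_⟩
    rintro x ⟨γ, h1, h2, rfl⟩
    exact hCmax_le γ h1 h2
  refine le_antisymm (Real.sSup_le ?_ hc0) ?_
  · rintro x ⟨γ, h1, h2, rfl⟩
    exact hCmax_le γ h1 h2
  · rw [Real.le_sSup_iff hSbdd hSne]
    intro δ hδ
    have hlim := Cfun_tendsto α β hα hαβ
    have hev : ∀ᶠ t in nhdsWithin (0:ℝ) (Ioi 0),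
        (2:ℝ) ^ (1 / β) + δ < Cfun α β (-(1 / β) + t) t :=
      hlim.eventually (eventually_gt_nhds (by linarith))
    have hmem : Ioo (0:ℝ) (min (1 / β) 1) ∈ nhdsWithin (0:ℝ) (Ioi 0) := by
      apply Ioo_mem_nhdsGT_of_mem
      constructor
      · exact le_rfl
      · exact lt_min (by positivity) one_pos
    obtain ⟨t, hFt, ht0, htlt⟩ := (hev.and hmem).exists
    have ht1 : t ≤ 1 := le_of_lt (lt_of_lt_of_le htlt (min_le_right _ _))
    have htβ : t < 1 / β := lt_of_lt_of_le htlt (min_le_left _ _)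
    refine ⟨Cmax α β (-(1 / β) + t), ⟨-(1 / β) + t, by linarith, by linarith, rfl⟩, ?_⟩
    have hle : Cfun α β (-(1 / β) + t) t ≤ Cmax α β (-(1 / β) + t) := by
      apply le_csSup (hbddim _ (by linarith) (by linarith))
      exact ⟨t, ⟨ht0.le, ht1⟩, rfl⟩
    linarith
end
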